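/- Let 𝒪 ⊂ S¹ × ℝ^{2n-2} be the open set where all radial coordinates r_i > 0, and define r = (1 + Σ_{i=1}^{n-1} r_i²)^{-1/2}. Then the map 𝒪 → T^n × S^{n-1} sending (z, r₁,...,r_{n-1}, θ₁,...,θ_{n-1}) to (z, θ₁,...,θ_{n-1}, r², (r r₁)²,..., (r r_{n-1})²) is a contact diffeomorphism onto the open subset of T^n × S^{n-1} where all spherical coordinates are positive; i.e., it pulls back the canonical contact form Σ a_i dt_i of ST*T^n to a positive multiple of dz + Σ r_i² dθ_i. -/

import Mathlib

/-- On the set 𝒪 ⊂ S¹ × ℝ^{2m} (m = n-1) where all rᵢ > 0, with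
r = (1 + Σ rᵢ²)^{-1/2}, the map (z,r,θ) ↦ (z,θ₁,…,θ_m, r², (r r₁)²,…,(r r_m)²) pulls back
the canonical contact form Σ aᵢ dtᵢ of ST*Tⁿ to a positive multiple of dz + Σ rᵢ² dθᵢ, and
is a bijection onto the subset of Tⁿ × S^{n-1} where all spherical coordinates are positive
(normalized by Σ aᵢ = 1).  Model: S¹ and Tⁿ replaced by their universal covers. -/
theorem stmt14 (m : ℕ) :
    (∃ h : ℝ × ((Fin m → ℝ) × (Fin m → ℝ)) → ℝ,
      ∀ p : ℝ × ((Fin m → ℝ) × (Fin m → ℝ)), (∀ i, 0 < p.2.1 i) →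
        0 < h p ∧
        ∀ v : ℝ × ((Fin m → ℝ) × (Fin m → ℝ)),
          (fun (y : (Fin (m + 1) → ℝ) × (Fin (m + 1) → ℝ))
               (w : (Fin (m + 1) → ℝ) × (Fin (m + 1) → ℝ)) => ∑ i, y.2 i * w.1 i)
            ((Fin.cons p.1 p.2.2,
              Fin.cons ((Real.sqrt (1 + ∑ i, p.2.1 i ^ 2))⁻¹ ^ 2)
                fun i => ((Real.sqrt (1 + ∑ j, p.2.1 j ^ 2))⁻¹ * p.2.1 i) ^ 2))
            (fderiv ℝ (fun q : ℝ × ((Fin m → ℝ) × (Fin m → ℝ)) =>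
                ((Fin.cons q.1 q.2.2 : Fin (m + 1) → ℝ),
                 (Fin.cons ((Real.sqrt (1 + ∑ i, q.2.1 i ^ 2))⁻¹ ^ 2)
                   fun i => ((Real.sqrt (1 + ∑ j, q.2.1 j ^ 2))⁻¹ * q.2.1 i) ^ 2 :
                     Fin (m + 1) → ℝ))) p v)
          = h p * (v.1 + ∑ i, p.2.1 i ^ 2 * v.2.2 i)) ∧
    Set.BijOn
      (fun q : ℝ × ((Fin m → ℝ) × (Fin m → ℝ)) =>
        ((Fin.cons q.1 q.2.2 : Fin (m + 1) → ℝ),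
         (Fin.cons ((Real.sqrt (1 + ∑ i, q.2.1 i ^ 2))⁻¹ ^ 2)
           fun i => ((Real.sqrt (1 + ∑ j, q.2.1 j ^ 2))⁻¹ * q.2.1 i) ^ 2 :
             Fin (m + 1) → ℝ)))
      {p | ∀ i, 0 < p.2.1 i}
      {y : (Fin (m + 1) → ℝ) × (Fin (m + 1) → ℝ) |
        (∀ i, 0 < y.2 i) ∧ ∑ i, y.2 i = 1} := by
  have key : ∀ r : Fin m → ℝ, Real.sqrt (1 + ∑ i, r i ^ 2) ^ 2 = 1 + ∑ i, r i ^ 2 :=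
    fun r => Real.sq_sqrt (by positivity)
  have hSne : ∀ r : Fin m → ℝ, (1 + ∑ i, r i ^ 2) ≠ 0 := fun r => by positivity
  simp only [mul_pow, inv_pow, key]
  -- the continuous linear map giving the derivative of the first component
  set E := ℝ × ((Fin m → ℝ) × (Fin m → ℝ)) with hE
  let L : E →L[ℝ] (Fin (m + 1) → ℝ) :=
    ContinuousLinearMap.pi (Fin.cases (ContinuousLinearMap.fst ℝ ℝ _)
      (fun j => (ContinuousLinearMap.proj j).comp
        ((ContinuousLinearMap.snd ℝ (Fin m → ℝ) (Fin m → ℝ)).comp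
          (ContinuousLinearMap.snd ℝ ℝ ((Fin m → ℝ) × (Fin m → ℝ))))))
  have hLapp : ∀ v : E, (L v : Fin (m + 1) → ℝ) = Fin.cons v.1 v.2.2 := by
    intro v; funext i
    induction i using Fin.cases with
    | zero => simp [L]; rfl
    | succ j => simp [L]; rfl
  have hLf : ∀ p : E, HasFDerivAt (fun q : E => (Fin.cons q.1 q.2.2 : Fin (m + 1) → ℝ)) L p := by
    intro p
    have : (fun q : E => (Fin.cons q.1 q.2.2 : Fin (m + 1) → ℝ)) = ⇑L := by
      funext q; rw [hLapp]
    rw [this]; exact L.hasFDerivAt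
  have hbase : Differentiable ℝ (fun q : E => 1 + ∑ i, q.2.1 i ^ 2) := by
    apply Differentiable.const_add
    apply Differentiable.fun_sum
    intro i _
    exact (by fun_prop : Differentiable ℝ (fun x : E => x.2.1 i)).pow 2
  have hSd : Differentiable ℝ (fun q : E => (1 + ∑ i, q.2.1 i ^ 2)⁻¹) :=
    hbase.inv (fun q => hSne q.2.1)
  have hgd : Differentiable ℝ (fun q : E =>
      (Fin.cons ((1 + ∑ i, q.2.1 i ^ 2)⁻¹)
        (fun i => (1 + ∑ j, q.2.1 j ^ 2)⁻¹ * q.2.1 i ^ 2) : Fin (m + 1) → ℝ)) := by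
    rw [differentiable_pi]
    intro i
    induction i using Fin.cases with
    | zero => simpa using hSd
    | succ j =>
      simp only [Fin.cons_succ]
      exact hSd.mul
        ((by fun_prop : Differentiable ℝ (fun x : E => x.2.1 j)).pow 2)
  constructor
  · refine ⟨fun p => (1 + ∑ i, p.2.1 i ^ 2)⁻¹, fun p hp => ⟨by positivity, fun v => ?_⟩⟩
    have hD : fderiv ℝ (fun q : E =>
        ((Fin.cons q.1 q.2.2 : Fin (m + 1) → ℝ),
         (Fin.cons ((1 + ∑ i, q.2.1 i ^ 2)⁻¹)
           (fun i => (1 + ∑ j, q.2.1 j ^ 2)⁻¹ * q.2.1 i ^ 2) : Fin (m + 1) → ℝ))) p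
        = L.prod (fderiv ℝ (fun q : E =>
            (Fin.cons ((1 + ∑ i, q.2.1 i ^ 2)⁻¹)
              (fun i => (1 + ∑ j, q.2.1 j ^ 2)⁻¹ * q.2.1 i ^ 2) : Fin (m + 1) → ℝ)) p) :=
      ((hLf p).prodMk (hgd p).hasFDerivAt).fderiv
    rw [hD]
    simp only [ContinuousLinearMap.prod_apply]
    rw [hLapp, Fin.sum_univ_succ]
    simp only [Fin.cons_zero, Fin.cons_succ]
    rw [mul_add, Finset.mul_sum]
    congr 1
    apply Finset.sum_congr rfl
    intro i _
    ring
  · refine ⟨?_, ?_, ?_⟩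
    · intro p hp
      simp only [Set.mem_setOf_eq] at hp ⊢
      constructor
      · intro i
        induction i using Fin.cases with
        | zero => simp only [Fin.cons_zero]; positivity
        | succ j =>
          simp only [Fin.cons_succ]
          exact mul_pos (by positivity) (pow_pos (hp j) 2)
      · rw [Fin.sum_univ_succ]
        simp only [Fin.cons_zero, Fin.cons_succ]
        rw [← Finset.mul_sum]
        have h := hSne p.2.1
        field_simp
    · intro p hp p' hp' heq
      simp only [Set.mem_setOf_eq] at hp hp'
      simp only [Prod.mk.injEq] at heq
      obtain ⟨h1, h2⟩ := heq
      rw [Fin.cons_inj] at h1 h2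
      have hSeq : (1 + ∑ i, p.2.1 i ^ 2) = (1 + ∑ i, p'.2.1 i ^ 2) :=
        inv_injective h2.1
      have hr : p.2.1 = p'.2.1 := by
        funext i
        have := congrFun h2.2 i
        rw [hSeq] at this
        have h2' : p.2.1 i ^ 2 = p'.2.1 i ^ 2 :=
          mul_left_cancel₀ (inv_ne_zero (hSne p'.2.1)) this
        nlinarith [hp i, hp' i]
      exact Prod.ext h1.1 (Prod.ext hr h1.2)
    · intro y hy
      simp only [Set.mem_setOf_eq] at hy
      obtain ⟨hpos, hsum⟩ := hy
      refine ⟨(y.1 0, (fun i : Fin m => Real.sqrt (y.2 i.succ / y.2 0), fun i : Fin m => y.1 i.succ)),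
        fun i : Fin m => Real.sqrt_pos.mpr (div_pos (hpos i.succ) (hpos 0)), ?_⟩
      have h0 : y.2 0 ≠ 0 := (hpos 0).ne'
      have hScomp : (1 + ∑ i : Fin m, Real.sqrt (y.2 i.succ / y.2 0) ^ 2) = (y.2 0)⁻¹ := by
        have : ∀ i : Fin m, Real.sqrt (y.2 i.succ / y.2 0) ^ 2 = y.2 i.succ / y.2 0 :=
          fun i => Real.sq_sqrt (div_nonneg (hpos i.succ).le (hpos 0).le)
        simp only [this]
        have hsum' : ∑ i : Fin m, y.2 i.succ = 1 - y.2 0 := by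
          rw [Fin.sum_univ_succ] at hsum; linarith
        rw [← Finset.sum_div, hsum']
        field_simp
        ring
      simp only [hScomp]
      have htail1 : (Fin.cons (y.1 0) (fun i => y.1 i.succ) : Fin (m + 1) → ℝ) = y.1 :=
        Fin.cons_self_tail y.1
      have htail2 : (Fin.cons ((y.2 0)⁻¹⁻¹)
          (fun i => (y.2 0)⁻¹⁻¹ * Real.sqrt (y.2 i.succ / y.2 0) ^ 2) : Fin (m + 1) → ℝ)
          = y.2 := by
        funext i
        induction i using Fin.cases with
        | zero => simp
        | succ j =>
          simp only [Fin.cons_succ, inv_inv,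
            Real.sq_sqrt (div_nonneg (hpos j.succ).le (hpos 0).le)]
          field_simp
      exact Prod.ext htail1 (by simpa using htail2)
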